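/- In the two-independent-multinomial setup, the conditional second moment of the estimated similarity Ŝ = p̂₁ · p̂₂ satisfies: E[Ŝ² | F] = S² + (1/C₂)·p₁ᵀ(diag(p₂) - p₂p₂ᵀ)p₁ + (1/C₁)·p₂ᵀ(diag(p₁) - p₁p₁ᵀ)p₂ + (1/(C₁C₂))·tr{(diag(p₂) - p₂p₂ᵀ)(diag(p₁) - p₁p₁ᵀ)}, where F = (p₁, p₂, C₁, C₂) and S = p₁ · p₂. -/

import Mathlib

open Matrix

/-- Probability mass function of the `Multinomial(C, p)` distribution on count vectors
`x : Fin V → ℕ`. -/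
noncomputable def multinomialMass (V C : ℕ) (p : Fin V → ℝ) (x : Fin V → ℕ) : ℝ :=
  if ∑ i, x i = C then (Nat.multinomial Finset.univ x : ℝ) * ∏ i, p i ^ x i else 0

namespace MultinomAux

open Finset Nat

variable {V : ℕ}

/-- Weight of a count vector under the multinomial distribution. -/
noncomputable def w (p : Fin V → ℝ) (x : Fin V → ℕ) : ℝ :=
  (Nat.multinomial Finset.univ x : ℝ) * ∏ i, p i ^ x i

lemma pascal (C : ℕ) (y : Fin V → ℕ) (hy : ∑ i, y i = C + 1) :
    ∑ v ∈ univ.filter (fun v => 1 ≤ y v),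
      Nat.multinomial univ (fun i => y i - if i = v then 1 else 0)
      = Nat.multinomial univ y := by
  have hprodpos : 0 < ∏ i, (y i)! := prod_pos fun i _ => (y i).factorial_pos
  apply Nat.eq_of_mul_eq_mul_right hprodpos
  have hspec : Nat.multinomial univ y * ∏ i, (y i)! = (C + 1)! := by
    rw [mul_comm, Nat.multinomial_spec]
    simp [hy]
  rw [hspec, sum_mul]
  have hterm : ∀ v ∈ univ.filter (fun v => 1 ≤ y v),
      Nat.multinomial univ (fun i => y i - if i = v then 1 else 0) * ∏ i, (y i)!
        = y v * C ! := by
    intro v hv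
    rw [mem_filter] at hv
    have hyv : 1 ≤ y v := hv.2
    have hfac : ∏ i, (y i)! = (∏ i, (y i - if i = v then 1 else 0)!) * y v := by
      calc ∏ i, (y i)!
          = ∏ i, ((y i - if i = v then 1 else 0)! * (if i = v then y v else 1)) := by
            refine Finset.prod_congr rfl fun i _ => ?_
            by_cases h : i = v
            · subst h
              obtain ⟨k, hk⟩ : ∃ k, y i = k + 1 := ⟨y i - 1, by omega⟩
              simp [hk, Nat.factorial_succ, mul_comm]
            · simp [h]
        _ = (∏ i, (y i - if i = v then 1 else 0)!) * ∏ i, (if i = v then y v else 1) :=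
            Finset.prod_mul_distrib
        _ = _ := by simp
    have hsum : ∑ i, (y i - if i = v then 1 else 0) = C := by
      rw [Finset.sum_tsub_distrib _ (fun i _ => by by_cases h : i = v; exacts [by simpa [h] using hyv, by simp [h]]), hy]
      simp
    have hs := Nat.multinomial_spec (univ : Finset (Fin V)) (fun i => y i - if i = v then 1 else 0)
    rw [hsum] at hs
    rw [hfac, ← mul_assoc, mul_comm (Nat.multinomial _ _) _, hs, mul_comm]
  rw [Finset.sum_congr rfl hterm]
  rw [Finset.sum_filter_of_ne (by
    intro x _ h
    rcases Nat.eq_zero_or_pos (y x) with h0 | h1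
    · exact absurd (by simp [h0]) h
    · exact h1)]
  rw [← Finset.sum_mul, hy, Nat.factorial_succ]

lemma rec_step (C : ℕ) (p : Fin V → ℝ) (g : (Fin V → ℕ) → ℝ) :
    ∑ y ∈ Finset.piAntidiag univ (C + 1), w p y * g y
    = ∑ v, p v * ∑ x ∈ Finset.piAntidiag univ C,
        w p x * g (fun i => x i + if i = v then 1 else 0) := by
  have hreidx : ∀ v : Fin V,
      ∑ x ∈ Finset.piAntidiag univ C, w p x * g (fun i => x i + if i = v then 1 else 0)
      = ∑ y ∈ (Finset.piAntidiag univ (C + 1)).filter (fun y => 1 ≤ y v),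
          w p (fun i => y i - if i = v then 1 else 0) * g y := by
    intro v
    refine Finset.sum_nbij' (fun x i => x i + if i = v then 1 else 0)
      (fun y i => y i - if i = v then 1 else 0) ?_ ?_ ?_ ?_ ?_
    · intro x hx
      rw [Finset.mem_piAntidiag] at hx
      rw [Finset.mem_filter, Finset.mem_piAntidiag]
      refine ⟨⟨?_, fun i _ => Finset.mem_univ i⟩, by simp⟩
      rw [Finset.sum_add_distrib, hx.1]
      simp
    · intro y hy
      rw [Finset.mem_filter, Finset.mem_piAntidiag] at hy
      rw [Finset.mem_piAntidiag]
      refine ⟨?_, fun i _ => Finset.mem_univ i⟩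
      rw [Finset.sum_tsub_distrib _ (fun i _ => by
        by_cases h : i = v
        exacts [by simpa [h] using hy.2, by simp [h]]), hy.1.1]
      simp
    · intro x _
      funext i
      simp
    · intro y hy
      rw [Finset.mem_filter] at hy
      funext i
      by_cases h : i = v
      · subst h; have := hy.2; simp; omega
      · simp [h]
    · intro x _
      simp
  calc ∑ y ∈ Finset.piAntidiag univ (C + 1), w p y * g y
      = ∑ y ∈ Finset.piAntidiag univ (C + 1), ∑ v,
          (if 1 ≤ y v then p v * ((w p fun i => y i - if i = v then 1 else 0) * g y) else 0) := by
        refine Finset.sum_congr rfl fun y hy => ?_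
        rw [Finset.mem_piAntidiag] at hy
        have hprod : ∀ v : Fin V, 1 ≤ y v →
            p v * ∏ i, p i ^ (y i - if i = v then 1 else 0) = ∏ i, p i ^ y i := by
          intro v hv
          have h1 : ∀ i, y i = (y i - if i = v then 1 else 0) + (if i = v then 1 else 0) := by
            intro i
            by_cases h : i = v
            · subst h; simp only [if_true, eq_self_iff_true]; omega
            · simp [h]
          have h3 : ∏ i, p i ^ y i
              = (∏ i, p i ^ (y i - if i = v then 1 else 0)) *
                ∏ i, p i ^ (if i = v then 1 else 0) := by
            rw [← Finset.prod_mul_distrib]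
            refine Finset.prod_congr rfl fun i _ => ?_
            rw [← pow_add, ← h1 i]
          have h2 : ∏ i, p i ^ (if i = v then 1 else 0) = p v := by simp
          rw [h3, h2, mul_comm]
        calc w p y * g y
            = (∑ v ∈ univ.filter (fun v => 1 ≤ y v),
                (Nat.multinomial univ (fun i => y i - if i = v then 1 else 0) : ℝ))
                * ((∏ i, p i ^ y i) * g y) := by
              rw [← Nat.cast_sum, pascal C y hy.1, w, mul_assoc]
          _ = ∑ v ∈ univ.filter (fun v => 1 ≤ y v),
                (Nat.multinomial univ (fun i => y i - if i = v then 1 else 0) : ℝ)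
                * ((∏ i, p i ^ y i) * g y) := by rw [Finset.sum_mul]
          _ = ∑ v, (if 1 ≤ y v then p v * ((w p fun i => y i - if i = v then 1 else 0) * g y)
                else 0) := by
              rw [Finset.sum_filter]
              refine Finset.sum_congr rfl fun v _ => ?_
              by_cases hv : 1 ≤ y v
              · simp only [if_pos hv, w]
                rw [← hprod v hv]
                ring
              · simp [hv]
    _ = ∑ v, ∑ y ∈ Finset.piAntidiag univ (C + 1),
          (if 1 ≤ y v then p v * ((w p fun i => y i - if i = v then 1 else 0) * g y) else 0) :=
        Finset.sum_comm
    _ = ∑ v, p v * ∑ x ∈ Finset.piAntidiag univ C,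
          w p x * g (fun i => x i + if i = v then 1 else 0) := by
        refine Finset.sum_congr rfl fun v _ => ?_
        rw [hreidx v, Finset.mul_sum, Finset.sum_filter]

lemma mass_zero (p : Fin V → ℝ) (hp1 : ∑ i, p i = 1) (C : ℕ) :
    ∑ x ∈ Finset.piAntidiag univ C, w p x = 1 := by
  have := Finset.sum_pow_eq_sum_piAntidiag (univ : Finset (Fin V)) p C
  rw [hp1, one_pow] at this
  simpa [w] using this.symm

lemma mom1 (p : Fin V → ℝ) (hp1 : ∑ i, p i = 1) (C : ℕ) (i : Fin V) :
    ∑ x ∈ Finset.piAntidiag univ C, w p x * (x i : ℝ) = C * p i := by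
  induction C with
  | zero => simp
  | succ C ih =>
    rw [rec_step C p (fun x => (x i : ℝ))]
    have : ∀ v : Fin V,
        ∑ x ∈ Finset.piAntidiag univ C, w p x * ((x i + if i = v then 1 else 0 : ℕ) : ℝ)
        = C * p i + (if i = v then 1 else 0) := by
      intro v
      have : ∀ x : Fin V → ℕ,
          w p x * ((x i + if i = v then 1 else 0 : ℕ) : ℝ)
          = w p x * (x i : ℝ) + (if i = v then 1 else 0 : ℝ) * w p x := by
        intro x
        by_cases h : i = v <;> simp [h] <;> ring
      rw [Finset.sum_congr rfl fun x _ => this x, Finset.sum_add_distrib, ih,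
        ← Finset.mul_sum, mass_zero p hp1, mul_one]
    rw [Finset.sum_congr rfl fun v _ => by rw [this v]]
    rw [Finset.sum_congr rfl fun v _ => (mul_add (p v) _ _)]
    rw [Finset.sum_add_distrib, ← Finset.sum_mul, hp1, one_mul]
    have h2 : ∑ v, p v * (if i = v then 1 else 0 : ℝ) = p i := by
      rw [Finset.sum_congr rfl fun v _ => by rw [mul_ite, mul_one, mul_zero]]
      simp [eq_comm]
    rw [h2]
    push_cast
    ring

lemma mom2 (p : Fin V → ℝ) (hp1 : ∑ i, p i = 1) (C : ℕ) (i j : Fin V) :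
    ∑ x ∈ Finset.piAntidiag univ C, w p x * ((x i : ℝ) * (x j : ℝ))
      = C * ((C : ℝ) - 1) * p i * p j + (if i = j then (C : ℝ) * p i else 0) := by
  induction C with
  | zero => simp
  | succ C ih =>
    rw [rec_step C p (fun x => (x i : ℝ) * (x j : ℝ))]
    have key : ∀ v : Fin V,
        ∑ x ∈ Finset.piAntidiag univ C,
          w p x * (((x i + if i = v then 1 else 0 : ℕ) : ℝ) *
            ((x j + if j = v then 1 else 0 : ℕ) : ℝ))
        = (C * ((C : ℝ) - 1) * p i * p j + (if i = j then (C : ℝ) * p i else 0))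
          + (if i = v then 1 else 0 : ℝ) * (C * p j)
          + (if j = v then 1 else 0 : ℝ) * (C * p i)
          + (if i = v then 1 else 0 : ℝ) * (if j = v then 1 else 0 : ℝ) := by
      intro v
      have hx : ∀ x : Fin V → ℕ,
          w p x * (((x i + if i = v then 1 else 0 : ℕ) : ℝ) *
            ((x j + if j = v then 1 else 0 : ℕ) : ℝ))
          = w p x * ((x i : ℝ) * (x j : ℝ))
            + (if i = v then 1 else 0 : ℝ) * (w p x * (x j : ℝ))
            + (if j = v then 1 else 0 : ℝ) * (w p x * (x i : ℝ))
            + (if i = v then 1 else 0 : ℝ) * (if j = v then 1 else 0 : ℝ) * w p x := by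
        intro x
        push_cast
        by_cases h1 : i = v <;> by_cases h2 : j = v <;> simp [h1, h2] <;> ring
      rw [Finset.sum_congr rfl fun x _ => hx x]
      rw [Finset.sum_add_distrib, Finset.sum_add_distrib, Finset.sum_add_distrib]
      rw [ih, ← Finset.mul_sum, ← Finset.mul_sum, ← Finset.mul_sum,
        mom1 p hp1 C j, mom1 p hp1 C i, mass_zero p hp1, mul_one]
    rw [Finset.sum_congr rfl fun v _ => by rw [key v]]
    have expand : ∀ v : Fin V, p v *
        ((C * ((C : ℝ) - 1) * p i * p j + (if i = j then (C : ℝ) * p i else 0))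
          + (if i = v then 1 else 0 : ℝ) * (C * p j)
          + (if j = v then 1 else 0 : ℝ) * (C * p i)
          + (if i = v then 1 else 0 : ℝ) * (if j = v then 1 else 0 : ℝ))
        = p v * (C * ((C : ℝ) - 1) * p i * p j + (if i = j then (C : ℝ) * p i else 0))
          + (if i = v then (C : ℝ) * p j * p v else 0)
          + (if j = v then (C : ℝ) * p i * p v else 0)
          + (if i = v then (if j = v then p v else 0) else 0) := by
      intro v
      by_cases h1 : i = v <;> by_cases h2 : j = v <;> simp [h1, h2] <;> ring
    rw [Finset.sum_congr rfl fun v _ => expand v]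
    rw [Finset.sum_add_distrib, Finset.sum_add_distrib, Finset.sum_add_distrib]
    rw [← Finset.sum_mul, hp1, one_mul]
    have e1 : ∑ v, (if i = v then (C : ℝ) * p j * p v else 0) = (C : ℝ) * p j * p i := by
      simp [eq_comm]
    have e2 : ∑ v, (if j = v then (C : ℝ) * p i * p v else 0) = (C : ℝ) * p i * p j := by
      simp [eq_comm]
    have e3 : ∑ v, (if i = v then (if j = v then p v else 0) else 0)
        = (if i = j then p i else 0) := by
      rw [Finset.sum_ite_eq univ i (fun v => if j = v then p v else 0)]
      simp only [mem_univ, if_true]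
      by_cases h : i = j
      · subst h; simp
      · rw [if_neg fun hji => h hji.symm, if_neg h]
    rw [e1, e2, e3]
    by_cases h : i = j
    · subst h
      simp only [if_true, eq_self_iff_true]
      push_cast
      ring
    · simp only [if_neg h]
      push_cast
      ring

lemma tsum_mass (C : ℕ) (p : Fin V → ℝ) (g : (Fin V → ℕ) → ℝ) :
    (∑' x : Fin V → ℕ, multinomialMass V C p x * g x)
    = ∑ x ∈ Finset.piAntidiag univ C, w p x * g x := by
  classical
  rw [tsum_eq_sum (s := Finset.piAntidiag univ C) (f := fun x => multinomialMass V C p x * g x)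
    (by
      intro x hx
      rw [Finset.mem_piAntidiag] at hx
      have : ¬ ∑ i, x i = C := fun h => hx ⟨h, fun i _ => Finset.mem_univ i⟩
      simp [multinomialMass, this])]
  refine Finset.sum_congr rfl fun x hx => ?_
  rw [Finset.mem_piAntidiag] at hx
  simp [multinomialMass, hx.1, w]


end MultinomAux

open MultinomAux Finset

/-- for `x₁ ~ Multinomial(C₁, p₁)` and `x₂ ~ Multinomial(C₂, p₂)`
conditionally independent given `F = (p₁, p₂, C₁, C₂)`, with `p̂_t = x_t/C_t` and
`Ŝ = p̂₁ · p̂₂`, `S = p₁ · p₂`: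
`E[Ŝ² | F] = S² + (1/C₂)·p₁ᵀ(diag(p₂) - p₂p₂ᵀ)p₁ + (1/C₁)·p₂ᵀ(diag(p₁) - p₁p₁ᵀ)p₂
  + (1/(C₁C₂))·tr{(diag(p₂) - p₂p₂ᵀ)(diag(p₁) - p₁p₁ᵀ)}`. -/
theorem multinomial_similarity_second_moment (V C₁ C₂ : ℕ) (hC₁ : 1 ≤ C₁) (hC₂ : 1 ≤ C₂)
    (p₁ p₂ : Fin V → ℝ)
    (hp₁0 : ∀ i, 0 ≤ p₁ i) (hp₁1 : ∑ i, p₁ i = 1)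
    (hp₂0 : ∀ i, 0 ≤ p₂ i) (hp₂1 : ∑ i, p₂ i = 1) :
    (∑' x₁ : Fin V → ℕ, ∑' x₂ : Fin V → ℕ,
        multinomialMass V C₁ p₁ x₁ * multinomialMass V C₂ p₂ x₂ *
          (∑ i, ((x₁ i : ℝ) / C₁) * ((x₂ i : ℝ) / C₂)) ^ 2)
      = (∑ i, p₁ i * p₂ i) ^ 2
        + (1 / (C₂ : ℝ)) * (p₁ ⬝ᵥ ((Matrix.diagonal p₂ - vecMulVec p₂ p₂) *ᵥ p₁))
        + (1 / (C₁ : ℝ)) * (p₂ ⬝ᵥ ((Matrix.diagonal p₁ - vecMulVec p₁ p₁) *ᵥ p₂))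
        + (1 / ((C₁ : ℝ) * C₂)) *
            Matrix.trace ((Matrix.diagonal p₂ - vecMulVec p₂ p₂) *
              (Matrix.diagonal p₁ - vecMulVec p₁ p₁)) := by
  classical
  have hc1 : (C₁ : ℝ) ≠ 0 := Nat.cast_ne_zero.mpr (by omega)
  have hc2 : (C₂ : ℝ) ≠ 0 := Nat.cast_ne_zero.mpr (by omega)
  -- Step 1: reduce to finite sums
  have step1 : (∑' x₁ : Fin V → ℕ, ∑' x₂ : Fin V → ℕ,
        multinomialMass V C₁ p₁ x₁ * multinomialMass V C₂ p₂ x₂ *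
          (∑ i, ((x₁ i : ℝ) / C₁) * ((x₂ i : ℝ) / C₂)) ^ 2)
      = ∑ x₁ ∈ Finset.piAntidiag univ C₁, ∑ x₂ ∈ Finset.piAntidiag univ C₂,
          w p₁ x₁ * w p₂ x₂ * (∑ i, ((x₁ i : ℝ) / C₁) * ((x₂ i : ℝ) / C₂)) ^ 2 := by
    have inner : ∀ x₁ : Fin V → ℕ,
        (∑' x₂ : Fin V → ℕ, multinomialMass V C₁ p₁ x₁ * multinomialMass V C₂ p₂ x₂ *
          (∑ i, ((x₁ i : ℝ) / C₁) * ((x₂ i : ℝ) / C₂)) ^ 2)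
        = multinomialMass V C₁ p₁ x₁ * ∑ x₂ ∈ Finset.piAntidiag univ C₂,
            w p₂ x₂ * (∑ i, ((x₁ i : ℝ) / C₁) * ((x₂ i : ℝ) / C₂)) ^ 2 := by
      intro x₁
      rw [show (fun x₂ : Fin V → ℕ => multinomialMass V C₁ p₁ x₁ * multinomialMass V C₂ p₂ x₂ *
          (∑ i, ((x₁ i : ℝ) / C₁) * ((x₂ i : ℝ) / C₂)) ^ 2)
        = fun x₂ => multinomialMass V C₂ p₂ x₂ *
            (multinomialMass V C₁ p₁ x₁ * (∑ i, ((x₁ i : ℝ) / C₁) * ((x₂ i : ℝ) / C₂)) ^ 2)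
        from funext fun x₂ => by ring]
      rw [tsum_mass]
      rw [Finset.mul_sum]
      refine Finset.sum_congr rfl fun x₂ _ => by ring
    rw [tsum_congr inner, tsum_mass]
    refine Finset.sum_congr rfl fun x₁ _ => ?_
    rw [Finset.mul_sum]
    refine Finset.sum_congr rfl fun x₂ _ => by ring
  rw [step1]
  -- Step 2: expand the square and factor
  have step2 : (∑ x₁ ∈ Finset.piAntidiag univ C₁, ∑ x₂ ∈ Finset.piAntidiag univ C₂,
          w p₁ x₁ * w p₂ x₂ * (∑ i, ((x₁ i : ℝ) / C₁) * ((x₂ i : ℝ) / C₂)) ^ 2)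
      = ∑ i, ∑ j, (1 / ((C₁:ℝ)^2 * (C₂:ℝ)^2)) *
          ((∑ x₁ ∈ Finset.piAntidiag univ C₁, w p₁ x₁ * ((x₁ i : ℝ) * (x₁ j : ℝ))) *
           (∑ x₂ ∈ Finset.piAntidiag univ C₂, w p₂ x₂ * ((x₂ i : ℝ) * (x₂ j : ℝ)))) := by
    have hsq : ∀ (x₁ x₂ : Fin V → ℕ),
        w p₁ x₁ * w p₂ x₂ * (∑ i, ((x₁ i : ℝ) / C₁) * ((x₂ i : ℝ) / C₂)) ^ 2
        = ∑ i, ∑ j, (1 / ((C₁:ℝ)^2 * (C₂:ℝ)^2)) *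
            ((w p₁ x₁ * ((x₁ i : ℝ) * (x₁ j : ℝ))) * (w p₂ x₂ * ((x₂ i : ℝ) * (x₂ j : ℝ)))) := by
      intro x₁ x₂
      rw [sq, Finset.sum_mul_sum]
      rw [Finset.mul_sum]
      refine Finset.sum_congr rfl fun i _ => ?_
      rw [Finset.mul_sum]
      refine Finset.sum_congr rfl fun j _ => ?_
      field_simp
    calc ∑ x₁ ∈ Finset.piAntidiag univ C₁, ∑ x₂ ∈ Finset.piAntidiag univ C₂,
          w p₁ x₁ * w p₂ x₂ * (∑ i, ((x₁ i : ℝ) / C₁) * ((x₂ i : ℝ) / C₂)) ^ 2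
        = ∑ x₁ ∈ Finset.piAntidiag univ C₁, ∑ x₂ ∈ Finset.piAntidiag univ C₂, ∑ i, ∑ j,
            (1 / ((C₁:ℝ)^2 * (C₂:ℝ)^2)) *
            ((w p₁ x₁ * ((x₁ i : ℝ) * (x₁ j : ℝ))) * (w p₂ x₂ * ((x₂ i : ℝ) * (x₂ j : ℝ)))) := by
          exact Finset.sum_congr rfl fun x₁ _ => Finset.sum_congr rfl fun x₂ _ => hsq x₁ x₂
      _ = ∑ x₁ ∈ Finset.piAntidiag univ C₁, ∑ i, ∑ j, ∑ x₂ ∈ Finset.piAntidiag univ C₂,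
            (1 / ((C₁:ℝ)^2 * (C₂:ℝ)^2)) *
            ((w p₁ x₁ * ((x₁ i : ℝ) * (x₁ j : ℝ))) * (w p₂ x₂ * ((x₂ i : ℝ) * (x₂ j : ℝ)))) := by
          refine Finset.sum_congr rfl fun x₁ _ => ?_
          rw [Finset.sum_comm]
          exact Finset.sum_congr rfl fun i _ => Finset.sum_comm
      _ = ∑ i, ∑ x₁ ∈ Finset.piAntidiag univ C₁, ∑ j, ∑ x₂ ∈ Finset.piAntidiag univ C₂,
            (1 / ((C₁:ℝ)^2 * (C₂:ℝ)^2)) *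
            ((w p₁ x₁ * ((x₁ i : ℝ) * (x₁ j : ℝ))) * (w p₂ x₂ * ((x₂ i : ℝ) * (x₂ j : ℝ)))) :=
          Finset.sum_comm
      _ = ∑ i, ∑ j, ∑ x₁ ∈ Finset.piAntidiag univ C₁, ∑ x₂ ∈ Finset.piAntidiag univ C₂,
            (1 / ((C₁:ℝ)^2 * (C₂:ℝ)^2)) *
            ((w p₁ x₁ * ((x₁ i : ℝ) * (x₁ j : ℝ))) * (w p₂ x₂ * ((x₂ i : ℝ) * (x₂ j : ℝ)))) :=
          Finset.sum_congr rfl fun i _ => Finset.sum_comm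
      _ = _ := by
          refine Finset.sum_congr rfl fun i _ => Finset.sum_congr rfl fun j _ => ?_
          simp_rw [← Finset.mul_sum]
          rw [Finset.sum_mul_sum]
          exact congrArg _ (Finset.sum_congr rfl fun x₁ _ => Finset.mul_sum _ _ _)
  rw [step2]
  -- Step 3: apply the second-moment formula and match with the RHS
  have hM : ∀ i j : Fin V, (∑ i_1 ∈ Finset.piAntidiag univ C₁, w p₁ i_1 * ((i_1 i : ℝ) * (i_1 j : ℝ)))
      = C₁ * ((C₁ : ℝ) - 1) * p₁ i * p₁ j + (if i = j then (C₁ : ℝ) * p₁ i else 0) :=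
    fun i j => mom2 p₁ hp₁1 C₁ i j
  have hM2 : ∀ i j : Fin V, (∑ x ∈ Finset.piAntidiag univ C₂, w p₂ x * ((x i : ℝ) * (x j : ℝ)))
      = C₂ * ((C₂ : ℝ) - 1) * p₂ i * p₂ j + (if i = j then (C₂ : ℝ) * p₂ i else 0) :=
    fun i j => mom2 p₂ hp₂1 C₂ i j
  simp_rw [hM, hM2]
  -- expand RHS matrix expressions into sums
  rw [show (∑ i, p₁ i * p₂ i) ^ 2 = ∑ i, ∑ j, (p₁ i * p₂ i) * (p₁ j * p₂ j) by
    rw [sq, Finset.sum_mul_sum]]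
  simp only [dotProduct, mulVec, Matrix.trace, Matrix.diag, Matrix.mul_apply, Matrix.sub_apply,
    Matrix.diagonal_apply, vecMulVec_apply]
  simp_rw [Finset.mul_sum, ← Finset.sum_add_distrib]
  refine Finset.sum_congr rfl fun i _ => Finset.sum_congr rfl fun j _ => ?_
  by_cases h : i = j
  · subst h
    simp only [if_pos rfl, eq_self_iff_true, ↓reduceIte]
    field_simp
    ring
  · have h' : ¬ j = i := fun hj => h hj.symm
    simp only [if_neg h, if_neg h']
    field_simp
    ring
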